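/- Let B(π, r) = {σ ∈ S_n : d_KT(π, σ) ≤ r} for π ∈ S_n and r ∈ (0, (n choose 2)]. Then for every ε ∈ (0, r): n·log(r/(n+ε)) − 2n ≤ log N(B(π,r), ε) ≤ log D(B(π,r), ε) ≤ n·log((2n+2r)/ε) + 2n. -/

import Mathlib

open Finset

/-- Kendall tau distance between two permutations of `Fin n`. -/
def dKT (n : ℕ) (π σ : Equiv.Perm (Fin n)) : ℕ :=
  (Finset.univ.filter fun q : Fin n × Fin n => σ q.1 < σ q.2 ∧ π q.2 < π q.1).card

/-- The ball of radius `r` around `π` in the Kendall tau distance. -/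
noncomputable def ballKT (n : ℕ) (π : Equiv.Perm (Fin n)) (r : ℝ) :
    Finset (Equiv.Perm (Fin n)) :=
  Finset.univ.filter fun σ => (dKT n π σ : ℝ) ≤ r

/-- The `ε`-covering number of `S ⊆ S_n` w.r.t. the Kendall tau distance:
the minimal cardinality of a set `T ⊆ S_n` such that every `σ ∈ S` is within
distance `ε` of some `τ ∈ T`. -/
noncomputable def coverNum (n : ℕ) (S : Finset (Equiv.Perm (Fin n))) (ε : ℝ) : ℕ :=
  sInf {k : ℕ | ∃ T : Finset (Equiv.Perm (Fin n)), T.card = k ∧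
    ∀ σ ∈ S, ∃ τ ∈ T, (dKT n σ τ : ℝ) ≤ ε}

/-- The `ε`-packing number of `S ⊆ S_n` w.r.t. the Kendall tau distance:
the maximal cardinality of a subset `P ⊆ S` whose distinct elements are at pairwise
distance greater than `ε`. -/
noncomputable def packNum (n : ℕ) (S : Finset (Equiv.Perm (Fin n))) (ε : ℝ) : ℕ :=
  sSup {k : ℕ | ∃ P : Finset (Equiv.Perm (Fin n)), P ⊆ S ∧ P.card = k ∧
    ∀ π ∈ P, ∀ σ ∈ P, π ≠ σ → ε < (dKT n π σ : ℝ)}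

variable {n : ℕ}

lemma dKT_self (π : Equiv.Perm (Fin n)) : dKT n π π = 0 := by
  rw [dKT, Finset.card_eq_zero, Finset.filter_eq_empty_iff]
  rintro q - ⟨h1, h2⟩
  exact absurd (h1.trans h2) (lt_irrefl _)

lemma dKT_comm (π σ : Equiv.Perm (Fin n)) : dKT n π σ = dKT n σ π := by
  rw [dKT, dKT]
  apply Finset.card_nbij (fun q => (q.2, q.1))
  · rintro ⟨a, b⟩ hq
    simp only [Finset.mem_coe, Finset.mem_filter, Finset.mem_univ, true_and] at *
    exact ⟨hq.2, hq.1⟩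
  · rintro ⟨a, b⟩ - ⟨c, d⟩ - h
    simpa [Prod.ext_iff, and_comm] using h
  · rintro ⟨a, b⟩ hq
    simp only [Finset.coe_filter, Finset.mem_univ, Set.mem_image, Set.mem_setOf_eq, true_and] at *
    exact ⟨(b, a), ⟨hq.2, hq.1⟩, rfl⟩

lemma dKT_triangle (π ρ σ : Equiv.Perm (Fin n)) : dKT n π σ ≤ dKT n π ρ + dKT n ρ σ := by
  refine le_trans (Finset.card_le_card ?_) (Finset.card_union_le _ _)
  intro q hq
  simp only [Finset.mem_filter, Finset.mem_univ, true_and, Finset.mem_union] at *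
  obtain ⟨h1, h2⟩ := hq
  rcases lt_or_ge (ρ q.1) (ρ q.2) with h | h
  · exact Or.inl ⟨h, h2⟩
  · rcases h.lt_or_eq with h | h
    · exact Or.inr ⟨h1, h⟩
    · exact absurd (ρ.injective h) (fun hh => absurd (hh ▸ h1) (lt_irrefl _))

lemma dKT_mul_right (π σ τ : Equiv.Perm (Fin n)) : dKT n (π * τ) (σ * τ) = dKT n π σ := by
  rw [dKT, dKT]
  apply Finset.card_equiv (Equiv.prodCongr τ τ)
  rintro ⟨a, b⟩
  rw [Finset.mem_filter, Finset.mem_filter]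
  simp [Equiv.Perm.mul_apply]

/-- Lehmer code. -/
def lcode (σ : Equiv.Perm (Fin n)) (i : Fin n) : ℕ :=
  (Finset.univ.filter fun j => i < j ∧ σ j < σ i).card

lemma sum_lcode (σ : Equiv.Perm (Fin n)) : ∑ i, lcode σ i = dKT n 1 σ := by
  rw [dKT]
  have := Finset.card_eq_sum_card_fiberwise
    (f := fun q : Fin n × Fin n => q.2)
    (s := Finset.univ.filter fun q : Fin n × Fin n => σ q.1 < σ q.2 ∧ (1 : Equiv.Perm (Fin n)) q.2 < (1 : Equiv.Perm (Fin n)) q.1)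
    (t := Finset.univ) (fun x _ => Finset.mem_univ _)
  rw [this]
  refine (Finset.sum_congr rfl fun i _ => ?_).symm
  rw [lcode]
  refine (Finset.card_nbij (fun j => (j, i)) ?_ ?_ ?_).symm
  · intro j hj
    have hj' : i < j ∧ σ j < σ i := by simpa using hj
    rw [Finset.mem_coe, Finset.mem_filter, Finset.mem_filter]
    exact ⟨⟨Finset.mem_univ _, hj'.2, hj'.1⟩, rfl⟩
  · intro a _ b _ h
    simpa using congrArg Prod.fst h
  · rintro ⟨a, b⟩ hq
    rw [Finset.mem_coe, Finset.mem_filter, Finset.mem_filter] at hq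
    obtain ⟨⟨-, h1, h2⟩, h3⟩ := hq
    change b = i at h3
    change b < a at h2
    subst h3
    exact ⟨a, by simpa using ⟨h2, h1⟩, rfl⟩

lemma lcode_lt (σ : Equiv.Perm (Fin n)) (i : Fin n) : lcode σ i < n - i := by
  have h1 : lcode σ i ≤ (Finset.Ioi i).card := by
    apply Finset.card_le_card
    intro j hj
    simp only [Finset.mem_filter, Finset.mem_univ, true_and, Finset.mem_Ioi] at *
    exact hj.1
  rw [Fin.card_Ioi] at h1
  omega

lemma lcode_key (σ : Equiv.Perm (Fin n)) (i : Fin n) :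
    (Finset.univ.filter fun j => j < i ∧ σ j < σ i).card + lcode σ i = (σ i : ℕ) := by
  rw [lcode, ← Finset.card_union_of_disjoint]
  · have hu : ((Finset.univ.filter fun j => j < i ∧ σ j < σ i) ∪
        Finset.univ.filter fun j => i < j ∧ σ j < σ i) =
        Finset.univ.filter fun j => σ j < σ i := by
      rw [← Finset.filter_or]
      apply Finset.filter_congr
      intro j _
      constructor
      · rintro (⟨-, h⟩ | ⟨-, h⟩) <;> exact h
      · intro h
        rcases lt_trichotomy j i with hj | hj | hj
        · exact Or.inl ⟨hj, h⟩
        · exact absurd (hj ▸ h) (lt_irrefl _)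
        · exact Or.inr ⟨hj, h⟩
    rw [hu]
    have : (Finset.univ.filter fun j => σ j < σ i).card = (Finset.Iio (σ i)).card := by
      apply Finset.card_nbij (fun j => σ j)
      · intro j hj
        simp only [Finset.mem_coe, Finset.mem_filter, Finset.mem_univ, true_and,
          Finset.mem_Iio] at *
        exact hj
      · intro a _ b _ h
        exact σ.injective h
      · intro v hv
        simp only [Finset.coe_filter, Finset.mem_univ, Set.mem_image, Set.mem_setOf_eq,
          true_and, Finset.mem_coe, Finset.mem_Iio] at *
        exact ⟨σ.symm v, by simp [hv], by simp⟩
    rw [this, Fin.card_Iio]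
  · rw [Finset.disjoint_filter]
    rintro j - ⟨h1, -⟩ ⟨h2, -⟩
    exact absurd (h1.trans h2) (lt_irrefl _)

lemma lcode_aux {σ τ : Equiv.Perm (Fin n)} {i : Fin n} (hc : lcode σ i = lcode τ i)
    (hpre : ∀ j, j < i → σ j = τ j) (hlt : σ i < τ i) : False := by
  have h1 := lcode_key σ i
  have h2 := lcode_key τ i
  have he : (Finset.univ.filter fun j => j < i ∧ τ j < τ i) =
      (Finset.univ.filter fun j => j < i ∧ σ j < τ i) := by
    apply Finset.filter_congr
    intro j _
    constructor
    · rintro ⟨hj, h⟩; exact ⟨hj, (hpre j hj) ▸ h⟩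
    · rintro ⟨hj, h⟩; exact ⟨hj, (hpre j hj) ▸ h⟩
  rw [he] at h2
  have hsplit : (Finset.univ.filter fun j => j < i ∧ σ j < τ i) =
      (Finset.univ.filter fun j => j < i ∧ σ j < σ i) ∪
      (Finset.univ.filter fun j => j < i ∧ σ i < σ j ∧ σ j < τ i) := by
    rw [← Finset.filter_or]
    apply Finset.filter_congr
    intro j _
    constructor
    · rintro ⟨hj, h⟩
      rcases lt_trichotomy (σ j) (σ i) with hh | hh | hh
      · exact Or.inl ⟨hj, hh⟩
      · exact absurd (σ.injective hh) (by intro hji; exact absurd (hji ▸ hj) (lt_irrefl _))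
      · exact Or.inr ⟨hj, hh, h⟩
    · rintro (⟨hj, h⟩ | ⟨hj, h1', h2'⟩)
      · exact ⟨hj, h.trans hlt⟩
      · exact ⟨hj, h2'⟩
  have hdisj : Disjoint (Finset.univ.filter fun j => j < i ∧ σ j < σ i)
      (Finset.univ.filter fun j => j < i ∧ σ i < σ j ∧ σ j < τ i) := by
    rw [Finset.disjoint_filter]
    rintro j - ⟨-, h1'⟩ ⟨-, h2', -⟩
    exact absurd (h1'.trans h2') (lt_irrefl _)
  rw [hsplit, Finset.card_union_of_disjoint hdisj] at h2
  have hd : (Finset.univ.filter fun j => j < i ∧ σ i < σ j ∧ σ j < τ i).card ≤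
      (Finset.Ioo (σ i) (τ i)).card := by
    apply Finset.card_le_card_of_injOn (fun j => σ j)
    · intro j hj
      simp only [Finset.mem_coe, Finset.mem_filter, Finset.mem_univ, true_and] at hj ⊢
      rw [Finset.mem_Ioo]
      exact ⟨hj.2.1, hj.2.2⟩
    · intro a _ b _ h
      exact σ.injective h
  rw [Fin.card_Ioo] at hd
  have hlt' : (σ i : ℕ) < (τ i : ℕ) := hlt
  omega

lemma lcode_injective : Function.Injective (lcode (n := n)) := by
  intro σ τ h
  by_contra hne
  have hs : (Finset.univ.filter fun i => σ i ≠ τ i).Nonempty := by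
    rw [Finset.filter_nonempty_iff]
    by_contra h'
    push_neg at h'
    exact hne (Equiv.ext fun i => h' i (Finset.mem_univ i))
  set i := Finset.min' _ hs with hi
  have himem : σ i ≠ τ i := by
    have := Finset.min'_mem _ hs
    rw [← hi] at this
    exact (Finset.mem_filter.mp this).2
  have hpre : ∀ j, j < i → σ j = τ j := by
    intro j hj
    by_contra hj'
    have : i ≤ j := Finset.min'_le _ _ (by simp [hj'])
    exact absurd (lt_of_lt_of_le hj this) (lt_irrefl _)
  rcases lt_trichotomy (σ i) (τ i) with hlt | heq | hgt
  · exact lcode_aux (congrFun h i) hpre hlt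
  · exact himem heq
  · exact lcode_aux (congrFun h.symm i) (fun j hj => (hpre j hj).symm) hgt

/-- The box of Lehmer codes. -/
def lbox (n : ℕ) : Finset (Fin n → ℕ) := Fintype.piFinset fun i => Finset.range (n - i)

lemma card_lbox : (lbox n).card = n.factorial := by
  rw [lbox, Fintype.card_piFinset]
  simp only [Finset.card_range]
  rw [Fin.prod_univ_eq_prod_range (fun i => n - i) n]
  have : ∀ i ∈ Finset.range n, n - i = (n - 1 - i) + 1 := by
    intro i hi; rw [Finset.mem_range] at hi; omega
  rw [Finset.prod_congr rfl this, Finset.prod_range_reflect (fun j => j + 1) n,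
    Finset.prod_range_add_one_eq_factorial]

lemma lcode_mem_lbox (σ : Equiv.Perm (Fin n)) : lcode σ ∈ lbox n := by
  rw [lbox, Fintype.mem_piFinset]
  intro i
  rw [Finset.mem_range]
  exact lcode_lt σ i

lemma image_lcode : (Finset.univ.image (lcode (n := n))) = lbox n := by
  apply Finset.eq_of_subset_of_card_le
  · intro b hb
    obtain ⟨σ, -, rfl⟩ := Finset.mem_image.mp hb
    exact lcode_mem_lbox σ
  · rw [card_lbox, Finset.card_image_of_injective _ lcode_injective]
    simp [Fintype.card_perm]

/-- Number of permutations with at most `m` inversions. -/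
def Bcard (n m : ℕ) : ℕ :=
  (Finset.univ.filter fun σ : Equiv.Perm (Fin n) => dKT n 1 σ ≤ m).card

lemma Bcard_eq (m : ℕ) : Bcard n m = ((lbox n).filter fun b => ∑ i, b i ≤ m).card := by
  rw [Bcard, ← image_lcode, Finset.filter_image,
    Finset.card_image_of_injective _ lcode_injective]
  congr 1
  apply Finset.filter_congr
  intro σ _
  rw [sum_lcode]

lemma Bcard_mono {m m' : ℕ} (h : m ≤ m') : Bcard n m ≤ Bcard n m' := by
  apply Finset.card_le_card
  intro σ hσ
  rw [Finset.mem_filter] at *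
  exact ⟨hσ.1, hσ.2.trans h⟩

lemma sb_card_le (m : ℕ) :
    ((lbox n).filter fun b => ∑ i, b i ≤ m).card ≤ (n + m).choose n := by
  classical
  set Ψ : (Fin n → ℕ) → Finset ℕ :=
    fun b => Finset.univ.image (fun i : Fin n => (i : ℕ) + ∑ j ∈ Finset.Iic i, b j) with hΨdef
  have hsm : ∀ b : Fin n → ℕ,
      StrictMono (fun i : Fin n => (i : ℕ) + ∑ j ∈ Finset.Iic i, b j) := by
    intro b i i' h
    have h1 : (i : ℕ) < (i' : ℕ) := h
    have h2 : ∑ j ∈ Finset.Iic i, b j ≤ ∑ j ∈ Finset.Iic i', b j :=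
      Finset.sum_le_sum_of_subset (Finset.Iic_subset_Iic.mpr h.le)
    dsimp only
    omega
  have hcard : ∀ b : Fin n → ℕ, (Ψ b).card = n := by
    intro b
    rw [hΨdef, Finset.card_image_of_injective _ (hsm b).injective, Finset.card_univ,
      Fintype.card_fin]
  have hmaps : ∀ b ∈ (lbox n).filter fun b => ∑ i, b i ≤ m,
      Ψ b ∈ Finset.powersetCard n (Finset.range (n + m)) := by
    intro b hb
    rw [Finset.mem_filter] at hb
    rw [Finset.mem_powersetCard]
    refine ⟨?_, hcard b⟩
    intro x hx
    rw [hΨdef] at hx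
    obtain ⟨i, -, rfl⟩ := Finset.mem_image.mp hx
    rw [Finset.mem_range]
    have h1 : (i : ℕ) < n := i.isLt
    have h2 : ∑ j ∈ Finset.Iic i, b j ≤ ∑ j, b j :=
      Finset.sum_le_sum_of_subset (Finset.subset_univ _)
    omega
  have hinj : Set.InjOn Ψ ((lbox n).filter fun b => ∑ i, b i ≤ m) := by
    intro b hb b' hb' heq
    have hFeq : (fun i : Fin n => (i : ℕ) + ∑ j ∈ Finset.Iic i, b j) =
        (fun i : Fin n => (i : ℕ) + ∑ j ∈ Finset.Iic i, b' j) := by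
      have e1 := Finset.orderEmbOfFin_unique (hcard b)
        (fun x => Finset.mem_image_of_mem _ (Finset.mem_univ x)) (hsm b)
      have e2 := Finset.orderEmbOfFin_unique (f := fun i : Fin n => (i : ℕ) + ∑ j ∈ Finset.Iic i, b' j)
        (hcard b) (fun x => by rw [heq]; exact Finset.mem_image_of_mem _ (Finset.mem_univ x))
        (hsm b')
      rw [e1, e2]
    by_contra hne
    have hs : (Finset.univ.filter fun i => b i ≠ b' i).Nonempty := by
      rw [Finset.filter_nonempty_iff]
      by_contra h'
      push_neg at h'
      exact hne (funext fun i => h' i (Finset.mem_univ i))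
    set i := Finset.min' _ hs with hi
    have himem : b i ≠ b' i := by
      have := Finset.min'_mem _ hs
      rw [← hi] at this
      exact (Finset.mem_filter.mp this).2
    have hpre : ∀ j, j < i → b j = b' j := by
      intro j hj
      by_contra hj'
      have : i ≤ j := Finset.min'_le _ _ (by simp [hj'])
      exact absurd (lt_of_lt_of_le hj this) (lt_irrefl _)
    have hIio : ∑ j ∈ Finset.Iio i, b j = ∑ j ∈ Finset.Iio i, b' j := by
      apply Finset.sum_congr rfl
      intro j hj
      exact hpre j (Finset.mem_Iio.mp hj)
    have hIic : (i : ℕ) + ∑ j ∈ Finset.Iic i, b j = (i : ℕ) + ∑ j ∈ Finset.Iic i, b' j :=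
      congrFun hFeq i
    rw [← Finset.Iio_insert, Finset.sum_insert (by simp : i ∉ Finset.Iio i),
      Finset.sum_insert (by simp : i ∉ Finset.Iio i), hIio] at hIic
    exact himem (by omega)
  calc ((lbox n).filter fun b => ∑ i, b i ≤ m).card
      ≤ (Finset.powersetCard n (Finset.range (n + m))).card :=
        Finset.card_le_card_of_injOn Ψ hmaps hinj
    _ = (n + m).choose n := by rw [Finset.card_powersetCard, Finset.card_range]

lemma sb_card_ge (m : ℕ) (hK : m / n + 1 ≤ n) :
    (m / n + 1) ^ (n - (m / n + 1)) * (m / n + 1).factorial ≤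
      ((lbox n).filter fun b => ∑ i, b i ≤ m).card := by
  classical
  set K := m / n + 1 with hKdef
  have hsub : (Fintype.piFinset fun i : Fin n => Finset.range (min (n - (i : ℕ)) K)) ⊆
      (lbox n).filter fun b => ∑ i, b i ≤ m := by
    intro b hb
    rw [Fintype.mem_piFinset] at hb
    rw [Finset.mem_filter]
    constructor
    · rw [lbox, Fintype.mem_piFinset]
      intro i
      have := hb i
      rw [Finset.mem_range] at *
      omega
    · have h1 : ∀ i : Fin n, b i ≤ m / n := by
        intro i
        have := hb i
        rw [Finset.mem_range] at this
        omega
      calc ∑ i, b i ≤ ∑ _i : Fin n, m / n := Finset.sum_le_sum fun i _ => h1 i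
        _ = m / n * n := by
            rw [Finset.sum_const, Finset.card_univ, Fintype.card_fin, smul_eq_mul, mul_comm]
        _ ≤ m := Nat.div_mul_le_self m n
  have hcard : (Fintype.piFinset fun i : Fin n => Finset.range (min (n - (i : ℕ)) K)).card
      = K ^ (n - K) * K.factorial := by
    rw [Fintype.card_piFinset]
    simp only [Finset.card_range]
    rw [Fin.prod_univ_eq_prod_range (fun i => min (n - i) K) n]
    have hstep : ∀ i ∈ Finset.range n, min (n - i) K = min (n - 1 - i + 1) K := by
      intro i hi; rw [Finset.mem_range] at hi; congr 1; omega
    rw [Finset.prod_congr rfl hstep, Finset.prod_range_reflect (fun j => min (j + 1) K) n]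
    rw [Finset.range_eq_Ico, ← Finset.prod_Ico_consecutive _ (Nat.zero_le K) hK]
    have h2 : ∀ i ∈ Finset.Ico 0 K, min (i + 1) K = i + 1 := by
      intro i hi
      rw [Finset.mem_Ico] at hi
      omega
    have h3 : ∀ i ∈ Finset.Ico K n, min (i + 1) K = K := by
      intro i hi
      rw [Finset.mem_Ico] at hi
      omega
    rw [Finset.prod_congr rfl h2, Finset.prod_congr rfl h3, Finset.prod_const,
      Nat.card_Ico, ← Finset.range_eq_Ico, Finset.prod_range_add_one_eq_factorial,
      mul_comm]
  rw [← hcard]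
  exact Finset.card_le_card hsub

lemma one_add_inv_pow_le (k : ℕ) (hk : 0 < k) :
    ((k : ℝ) + 1) ^ k ≤ (k : ℝ) ^ k * Real.exp 1 := by
  have hk' : (0 : ℝ) < k := by exact_mod_cast hk
  have h2 : ((k : ℝ) + 1) ^ k ≤ ((k : ℝ) * Real.exp (1 / k)) ^ k := by
    apply pow_le_pow_left₀ (by positivity)
    have h3 := Real.add_one_le_exp (1 / (k : ℝ))
    have h4 : (k : ℝ) + 1 = k * (1 / k + 1) := by field_simp; ring
    rw [h4]
    exact mul_le_mul_of_nonneg_left h3 hk'.le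
  calc ((k : ℝ) + 1) ^ k ≤ ((k : ℝ) * Real.exp (1 / k)) ^ k := h2
    _ = (k : ℝ) ^ k * Real.exp (1 / k) ^ k := mul_pow _ _ _
    _ = (k : ℝ) ^ k * Real.exp 1 := by
        rw [← Real.exp_nat_mul]
        congr 1
        field_simp

lemma fact_lb (k : ℕ) : (k : ℝ) ^ k ≤ k.factorial * Real.exp k := by
  induction k with
  | zero => simp
  | succ k ih =>
    rcases Nat.eq_zero_or_pos k with rfl | hk
    · have h := Real.add_one_le_exp (1 : ℝ)
      norm_num [Nat.factorial]
      try linarith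
    · have h1 := one_add_inv_pow_le k hk
      have hfk : (0 : ℝ) < k.factorial := by exact_mod_cast k.factorial_pos
      have hek : (0 : ℝ) < Real.exp 1 := Real.exp_pos 1
      have hkk : (0 : ℝ) ≤ (k : ℝ) + 1 := by positivity
      have hkpow : (0 : ℝ) ≤ (k : ℝ) ^ k := by positivity
      push_cast [Nat.factorial_succ]
      calc ((k : ℝ) + 1) ^ (k + 1) = ((k : ℝ) + 1) ^ k * ((k : ℝ) + 1) := pow_succ _ _
        _ ≤ (k : ℝ) ^ k * Real.exp 1 * ((k : ℝ) + 1) := by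
            exact mul_le_mul_of_nonneg_right h1 hkk
        _ ≤ (k.factorial * Real.exp k) * Real.exp 1 * ((k : ℝ) + 1) := by
            have := mul_le_mul_of_nonneg_right ih hek.le
            exact mul_le_mul_of_nonneg_right this hkk
        _ = ((k : ℝ) + 1) * k.factorial * Real.exp ((k : ℝ) + 1) := by
            rw [Real.exp_add]
            ring

lemma Bcard_le_real (m : ℕ) : (Bcard n m : ℝ) ≤ ((n : ℝ) + m) ^ n * Real.exp n / n ^ n := by
  rcases Nat.eq_zero_or_pos n with rfl | hn
  · simp [Bcard]
    norm_num
    rw [Finset.card_le_one]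
    intro a _ b _
    exact Subsingleton.elim a b
  have h1 : (Bcard n m : ℝ) ≤ ((n + m).choose n : ℝ) := by
    exact_mod_cast (Bcard_eq m ▸ sb_card_le m)
  have h2 : ((n + m).choose n : ℝ) ≤ ((n : ℝ) + m) ^ n / n.factorial := by
    have h := Nat.choose_le_pow_div (α := ℝ) n (n + m)
    push_cast at h
    exact h
  have hnn : (0 : ℝ) < (n : ℝ) ^ n := by positivity
  have hfn : (0 : ℝ) < n.factorial := by exact_mod_cast n.factorial_pos
  have h4 : (((n : ℝ)) + m) ^ n / n.factorial ≤ ((n : ℝ) + m) ^ n * Real.exp n / n ^ n := by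
    rw [div_le_div_iff₀ hfn hnn]
    have h5 := fact_lb n
    have h6 : (0 : ℝ) ≤ ((n : ℝ) + m) ^ n := by positivity
    nlinarith
  exact (h1.trans h2).trans h4

lemma Bcard_ge_real (m : ℕ) (hK : m / n + 1 ≤ n) :
    ((m / n + 1 : ℕ) : ℝ) ^ n * Real.exp (-((m / n + 1 : ℕ) : ℝ)) ≤ (Bcard n m : ℝ) := by
  set K := m / n + 1 with hKdef
  have h1 : (K ^ (n - K) * K.factorial : ℕ) ≤ Bcard n m := Bcard_eq m ▸ sb_card_ge m hK
  have h2 : ((K : ℝ)) ^ n * Real.exp (-(K : ℝ)) ≤ (K : ℝ) ^ (n - K) * K.factorial := by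
    have h3 : (K : ℝ) ^ n = (K : ℝ) ^ (n - K) * (K : ℝ) ^ K := by
      rw [← pow_add]
      congr 1
      omega
    rw [h3]
    have h4 := fact_lb K
    have h5 : (0 : ℝ) ≤ (K : ℝ) ^ (n - K) := by positivity
    have h6 : Real.exp (-(K : ℝ)) * Real.exp (K : ℝ) = 1 := by
      rw [← Real.exp_add]; simp
    have h7 : (K : ℝ) ^ K * Real.exp (-(K : ℝ)) ≤ K.factorial := by
      have := mul_le_mul_of_nonneg_right h4 (Real.exp_pos (-(K : ℝ))).le
      calc (K : ℝ) ^ K * Real.exp (-(K : ℝ)) ≤ K.factorial * Real.exp K * Real.exp (-(K : ℝ)) := this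
        _ = K.factorial := by rw [mul_assoc, mul_comm (Real.exp _), h6, mul_one]
    calc (K : ℝ) ^ (n - K) * (K : ℝ) ^ K * Real.exp (-(K : ℝ))
        = (K : ℝ) ^ (n - K) * ((K : ℝ) ^ K * Real.exp (-(K : ℝ))) := by ring
      _ ≤ (K : ℝ) ^ (n - K) * K.factorial := mul_le_mul_of_nonneg_left h7 h5
  calc ((K : ℝ)) ^ n * Real.exp (-(K : ℝ)) ≤ (K : ℝ) ^ (n - K) * K.factorial := h2
    _ ≤ (Bcard n m : ℝ) := by exact_mod_cast h1

lemma ballKT_card (π : Equiv.Perm (Fin n)) (ρ : ℝ) (hρ : 0 ≤ ρ) :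
    (ballKT n π ρ).card = Bcard n ⌊ρ⌋₊ := by
  rw [ballKT, Bcard]
  apply Finset.card_equiv (Equiv.mulRight π⁻¹)
  intro σ
  simp only [Finset.mem_filter, Finset.mem_univ, true_and, Equiv.coe_mulRight]
  have hd : dKT n π σ = dKT n 1 (σ * π⁻¹) := by
    rw [← dKT_mul_right 1 (σ * π⁻¹) π, one_mul, inv_mul_cancel_right]
  rw [← hd, ← Nat.le_floor_iff hρ]

lemma mem_ballKT {π σ : Equiv.Perm (Fin n)} {ρ : ℝ} :
    σ ∈ ballKT n π ρ ↔ (dKT n π σ : ℝ) ≤ ρ := by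
  rw [ballKT, Finset.mem_filter]
  simp

lemma coverSet_nonempty (π : Equiv.Perm (Fin n)) (r ε : ℝ) (hε : 0 ≤ ε) :
    {k : ℕ | ∃ T : Finset (Equiv.Perm (Fin n)), T.card = k ∧
      ∀ σ ∈ ballKT n π r, ∃ τ ∈ T, (dKT n σ τ : ℝ) ≤ ε}.Nonempty :=
  ⟨Finset.univ.card, Finset.univ, rfl, fun σ _ =>
    ⟨σ, Finset.mem_univ σ, by simp [dKT_self, hε]⟩⟩

lemma cover_count (π : Equiv.Perm (Fin n)) (r ε : ℝ) (hr : 0 ≤ r) (hε : 0 ≤ ε) :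
    Bcard n ⌊r⌋₊ ≤ coverNum n (ballKT n π r) ε * Bcard n ⌊ε⌋₊ := by
  obtain ⟨T, hTcard, hTcover⟩ := Nat.sInf_mem (coverSet_nonempty π r ε hε)
  have hsub : ballKT n π r ⊆ T.biUnion fun τ => ballKT n τ ε := by
    intro σ hσ
    obtain ⟨τ, hτT, hτd⟩ := hTcover σ hσ
    rw [Finset.mem_biUnion]
    refine ⟨τ, hτT, ?_⟩
    rw [mem_ballKT, dKT_comm]
    exact hτd
  calc Bcard n ⌊r⌋₊ = (ballKT n π r).card := (ballKT_card π r hr).symm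
    _ ≤ (T.biUnion fun τ => ballKT n τ ε).card := Finset.card_le_card hsub
    _ ≤ ∑ τ ∈ T, (ballKT n τ ε).card := Finset.card_biUnion_le
    _ = T.card * Bcard n ⌊ε⌋₊ := by
        rw [Finset.sum_congr rfl fun τ _ => ballKT_card τ ε hε, Finset.sum_const, smul_eq_mul]
    _ = coverNum n (ballKT n π r) ε * Bcard n ⌊ε⌋₊ := by rw [hTcard]; rfl

lemma coverNum_pos (π : Equiv.Perm (Fin n)) (r ε : ℝ) (hr : 0 ≤ r) (hε : 0 ≤ ε) :
    1 ≤ coverNum n (ballKT n π r) ε := by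
  obtain ⟨T, hTcard, hTcover⟩ := Nat.sInf_mem (coverSet_nonempty π r ε hε)
  obtain ⟨τ, hτT, -⟩ := hTcover π (by rw [mem_ballKT]; simp [dKT_self, hr])
  have : 0 < T.card := Finset.card_pos.mpr ⟨τ, hτT⟩
  rw [hTcard] at this
  exact this

lemma packSet_nonempty (π : Equiv.Perm (Fin n)) (r ε : ℝ) :
    {k : ℕ | ∃ P : Finset (Equiv.Perm (Fin n)), P ⊆ ballKT n π r ∧ P.card = k ∧
      ∀ a ∈ P, ∀ σ ∈ P, a ≠ σ → ε < (dKT n a σ : ℝ)}.Nonempty :=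
  ⟨0, ∅, Finset.empty_subset _, Finset.card_empty, by simp⟩

lemma packSet_bdd (π : Equiv.Perm (Fin n)) (r ε : ℝ) :
    BddAbove {k : ℕ | ∃ P : Finset (Equiv.Perm (Fin n)), P ⊆ ballKT n π r ∧ P.card = k ∧
      ∀ a ∈ P, ∀ σ ∈ P, a ≠ σ → ε < (dKT n a σ : ℝ)} := by
  refine ⟨Fintype.card (Equiv.Perm (Fin n)), ?_⟩
  rintro k ⟨P, -, hcard, -⟩
  rw [← hcard, ← Finset.card_univ]
  exact Finset.card_le_card (Finset.subset_univ P)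

lemma pack_count (π : Equiv.Perm (Fin n)) (r ε : ℝ) (hr : 0 ≤ r) (hε : 0 < ε) :
    packNum n (ballKT n π r) ε * Bcard n ⌊ε / 2⌋₊ ≤ Bcard n ⌊r + ε / 2⌋₊ := by
  obtain ⟨P, hPsub, hPcard, hPsep⟩ :=
    Nat.sSup_mem (packSet_nonempty π r ε) (packSet_bdd π r ε)
  have hdisj : ∀ σ₁ ∈ P, ∀ σ₂ ∈ P, σ₁ ≠ σ₂ →
      Disjoint (ballKT n σ₁ (ε / 2)) (ballKT n σ₂ (ε / 2)) := by
    intro σ₁ h₁ σ₂ h₂ hne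
    rw [Finset.disjoint_left]
    intro τ hτ₁ hτ₂
    rw [mem_ballKT] at hτ₁ hτ₂
    have htri : (dKT n σ₁ σ₂ : ℝ) ≤ (dKT n σ₁ τ : ℝ) + (dKT n τ σ₂ : ℝ) := by
      exact_mod_cast dKT_triangle σ₁ τ σ₂
    rw [dKT_comm τ σ₂] at htri
    have := hPsep σ₁ h₁ σ₂ h₂ hne
    linarith
  have hsub : (P.biUnion fun σ => ballKT n σ (ε / 2)) ⊆ ballKT n π (r + ε / 2) := by
    intro τ hτ
    rw [Finset.mem_biUnion] at hτ
    obtain ⟨σ, hσP, hτσ⟩ := hτ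
    rw [mem_ballKT] at *
    have hπσ : (dKT n π σ : ℝ) ≤ r := mem_ballKT.mp (hPsub hσP)
    have htri : (dKT n π τ : ℝ) ≤ (dKT n π σ : ℝ) + (dKT n σ τ : ℝ) := by
      exact_mod_cast dKT_triangle π σ τ
    linarith
  have hhalf : (0 : ℝ) ≤ ε / 2 := by linarith
  calc packNum n (ballKT n π r) ε * Bcard n ⌊ε / 2⌋₊
      = ∑ σ ∈ P, (ballKT n σ (ε / 2)).card := by
        rw [Finset.sum_congr rfl fun σ _ => ballKT_card σ (ε / 2) hhalf, Finset.sum_const,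
          smul_eq_mul, hPcard]
        rfl
    _ = (P.biUnion fun σ => ballKT n σ (ε / 2)).card := (Finset.card_biUnion hdisj).symm
    _ ≤ (ballKT n π (r + ε / 2)).card := Finset.card_le_card hsub
    _ = Bcard n ⌊r + ε / 2⌋₊ := ballKT_card π (r + ε / 2) (by linarith)

lemma cover_le_pack (π : Equiv.Perm (Fin n)) (r ε : ℝ) (hε : 0 < ε) :
    coverNum n (ballKT n π r) ε ≤ packNum n (ballKT n π r) ε := by
  obtain ⟨P, hPsub, hPcard, hPsep⟩ :=
    Nat.sSup_mem (packSet_nonempty π r ε) (packSet_bdd π r ε)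
  have hcover : ∀ σ ∈ ballKT n π r, ∃ τ ∈ P, (dKT n σ τ : ℝ) ≤ ε := by
    by_contra hc
    push_neg at hc
    obtain ⟨σ, hσball, hσfar⟩ := hc
    have hσP : σ ∉ P := by
      intro hmem
      have := hσfar σ hmem
      rw [dKT_self] at this
      simp at this
      linarith
    have hmem : (P.card + 1) ∈ {k : ℕ | ∃ P' : Finset (Equiv.Perm (Fin n)),
        P' ⊆ ballKT n π r ∧ P'.card = k ∧
        ∀ a ∈ P', ∀ τ ∈ P', a ≠ τ → ε < (dKT n a τ : ℝ)} := by
      refine ⟨insert σ P, ?_, ?_, ?_⟩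
      · intro a ha
        rcases Finset.mem_insert.mp ha with rfl | ha
        · exact hσball
        · exact hPsub ha
      · rw [Finset.card_insert_of_notMem hσP]
      · intro a ha' b hb' hne
        rcases Finset.mem_insert.mp ha' with h1 | h1 <;>
          rcases Finset.mem_insert.mp hb' with h2 | h2
        · exact absurd (h1.trans h2.symm) hne
        · subst h1; exact hσfar b h2
        · subst h2; rw [dKT_comm]; exact hσfar a h1
        · exact hPsep a h1 b h2 hne
    have hle : P.card + 1 ≤ packNum n (ballKT n π r) ε := le_csSup (packSet_bdd π r ε) hmem
    have heq : packNum n (ballKT n π r) ε = P.card := hPcard.symm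
    omega
  have : coverNum n (ballKT n π r) ε ≤ P.card := Nat.sInf_le ⟨P, rfl, hcover⟩
  rw [hPcard] at this
  exact this

lemma packNum_le_card (π : Equiv.Perm (Fin n)) (r ε : ℝ) :
    packNum n (ballKT n π r) ε ≤ Fintype.card (Equiv.Perm (Fin n)) := by
  apply csSup_le (packSet_nonempty π r ε)
  rintro k ⟨P, -, hcard, -⟩
  rw [← hcard, ← Finset.card_univ]
  exact Finset.card_le_card (Finset.subset_univ P)

lemma Bcard_pos (m : ℕ) : 0 < Bcard n m :=
  Finset.card_pos.mpr ⟨1, Finset.mem_filter.mpr ⟨Finset.mem_univ _, by rw [dKT_self]; omega⟩⟩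

lemma choose2R (hn2 : 2 ≤ n) : ((n.choose 2 : ℕ) : ℝ) = (n : ℝ) * ((n : ℝ) - 1) / 2 := by
  have heven : Even (n * (n - 1)) := by
    have h := Nat.even_mul_succ_self (n - 1)
    have h1 : n - 1 + 1 = n := by omega
    rw [h1] at h
    rwa [mul_comm]
  have h2c : 2 * n.choose 2 = n * (n - 1) := by
    rw [Nat.choose_two_right]
    exact Nat.mul_div_cancel' heven.two_dvd
  have h := congrArg (Nat.cast : ℕ → ℝ) h2c
  push_cast [Nat.cast_sub (by omega : 1 ≤ n)] at h
  linarith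

lemma K_le_n {ρ : ℝ} (hn2 : 2 ≤ n) (hρ : ρ ≤ (n.choose 2 : ℝ)) : ⌊ρ⌋₊ / n + 1 ≤ n := by
  have hn0 : 0 < n := by omega
  have hfloor_le : ⌊ρ⌋₊ ≤ n.choose 2 := by
    have h := Nat.floor_le_floor hρ
    rwa [Nat.floor_natCast] at h
  have h2c : 2 * n.choose 2 = n * (n - 1) := by
    have heven : Even (n * (n - 1)) := by
      have h := Nat.even_mul_succ_self (n - 1)
      have h1 : n - 1 + 1 = n := by omega
      rw [h1] at h
      rwa [mul_comm]
    rw [Nat.choose_two_right]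
    exact Nat.mul_div_cancel' heven.two_dvd
  have h1 : ⌊ρ⌋₊ ≤ n * (n - 1) := by omega
  have h2 : ⌊ρ⌋₊ / n ≤ n * (n - 1) / n := Nat.div_le_div_right h1
  rw [Nat.mul_div_cancel_left _ hn0] at h2
  omega

lemma rho_le_nK {ρ : ℝ} (hn0 : 0 < n) (hρ0 : 0 ≤ ρ) : ρ ≤ (n : ℝ) * (⌊ρ⌋₊ / n + 1 : ℕ) := by
  have h1 : n * (⌊ρ⌋₊ / n) + ⌊ρ⌋₊ % n = ⌊ρ⌋₊ := Nat.div_add_mod _ n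
  have h2 : ⌊ρ⌋₊ % n < n := Nat.mod_lt _ hn0
  have h3 : ⌊ρ⌋₊ + 1 ≤ n * (⌊ρ⌋₊ / n + 1) := by rw [Nat.mul_succ]; omega
  have h4 : ρ < (⌊ρ⌋₊ : ℝ) + 1 := Nat.lt_floor_add_one ρ
  have h5 : ((⌊ρ⌋₊ + 1 : ℕ) : ℝ) ≤ ((n * (⌊ρ⌋₊ / n + 1) : ℕ) : ℝ) := by exact_mod_cast h3
  push_cast at h5 ⊢
  linarith

lemma cover_lower (hn2 : 2 ≤ n) (π : Equiv.Perm (Fin n)) (r ε : ℝ)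
    (hr0 : 0 < r) (hr : r ≤ (n.choose 2 : ℝ)) (hε0 : 0 < ε) :
    (n : ℝ) * Real.log (r / ((n : ℝ) + ε)) - 2 * n ≤
      Real.log (coverNum n (ballKT n π r) ε) := by
  have hn0 : 0 < n := by omega
  have hnR : (0 : ℝ) < n := by exact_mod_cast hn0
  set N := coverNum n (ballKT n π r) ε with hNdef
  set Kr := ⌊r⌋₊ / n + 1 with hKrdef
  have hKrn : Kr ≤ n := K_le_n hn2 hr
  have hBr := Bcard_ge_real (n := n) ⌊r⌋₊ hKrn
  have hrnKr : r ≤ (n : ℝ) * Kr := rho_le_nK hn0 hr0.le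
  have hcovR : (Bcard n ⌊r⌋₊ : ℝ) ≤ (N : ℝ) * Bcard n ⌊ε⌋₊ := by
    exact_mod_cast cover_count π r ε hr0.le hε0.le
  have hnε : (0 : ℝ) < (n : ℝ) + ε := by linarith
  have hBε2 : (Bcard n ⌊ε⌋₊ : ℝ) ≤ ((n : ℝ) + ε) ^ n * Real.exp n / n ^ n := by
    refine (Bcard_le_real (n := n) ⌊ε⌋₊).trans ?_
    gcongr
    exact Nat.floor_le hε0.le
  have hBεpos : (0 : ℝ) < (Bcard n ⌊ε⌋₊ : ℝ) := by exact_mod_cast Bcard_pos (n := n) ⌊ε⌋₊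
  set L : ℝ := (r / ((n : ℝ) + ε)) ^ n * Real.exp (-(2 * (n : ℝ))) with hLdef
  have hLpos : (0 : ℝ) < L := by
    rw [hLdef]
    have : (0 : ℝ) < r / ((n : ℝ) + ε) := by positivity
    positivity
  have hKrR : r / (n : ℝ) ≤ (Kr : ℝ) := by
    rw [div_le_iff₀ hnR]
    calc r ≤ (n : ℝ) * Kr := hrnKr
      _ = Kr * n := mul_comm _ _
  have hKrn' : (Kr : ℝ) ≤ (n : ℝ) := by exact_mod_cast hKrn
  have hexp : Real.exp (-(2 * (n : ℝ))) * Real.exp (n : ℝ) = Real.exp (-(n : ℝ)) := by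
    rw [← Real.exp_add]; congr 1; ring
  have step1 : L * (((n : ℝ) + ε) ^ n * Real.exp n / n ^ n)
      ≤ (Kr : ℝ) ^ n * Real.exp (-(Kr : ℝ)) := by
    have e1 : L * (((n : ℝ) + ε) ^ n * Real.exp n / n ^ n)
        = (r / (n : ℝ)) ^ n * Real.exp (-(n : ℝ)) := by
      rw [hLdef]
      calc (r / ((n : ℝ) + ε)) ^ n * Real.exp (-(2 * (n : ℝ))) *
            (((n : ℝ) + ε) ^ n * Real.exp n / n ^ n)
          = ((r / ((n : ℝ) + ε)) ^ n * ((n : ℝ) + ε) ^ n) *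
            (Real.exp (-(2 * (n : ℝ))) * Real.exp n) / n ^ n := by ring
        _ = r ^ n * Real.exp (-(n : ℝ)) / n ^ n := by
            rw [← mul_pow, div_mul_cancel₀ _ (by positivity : ((n : ℝ) + ε) ≠ 0), hexp]
        _ = (r / (n : ℝ)) ^ n * Real.exp (-(n : ℝ)) := by rw [div_pow]; ring
    rw [e1]
    gcongr
    all_goals first
    | positivity
    | linarith
  have c1 : L * (Bcard n ⌊ε⌋₊ : ℝ) ≤ (N : ℝ) * (Bcard n ⌊ε⌋₊ : ℝ) := by
    calc L * (Bcard n ⌊ε⌋₊ : ℝ) ≤ L * (((n : ℝ) + ε) ^ n * Real.exp n / n ^ n) :=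
          mul_le_mul_of_nonneg_left hBε2 hLpos.le
      _ ≤ (Kr : ℝ) ^ n * Real.exp (-(Kr : ℝ)) := step1
      _ ≤ (Bcard n ⌊r⌋₊ : ℝ) := hBr
      _ ≤ (N : ℝ) * (Bcard n ⌊ε⌋₊ : ℝ) := hcovR
  have key : L ≤ (N : ℝ) := le_of_mul_le_mul_right c1 hBεpos
  have hlogL : Real.log L = (n : ℝ) * Real.log (r / ((n : ℝ) + ε)) - 2 * n := by
    rw [hLdef, Real.log_mul (by positivity) (Real.exp_ne_zero _), Real.log_pow, Real.log_exp]
    ring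
  rw [← hlogL]
  exact Real.log_le_log hLpos key

lemma pack_upper (hn3 : 3 ≤ n) (π : Equiv.Perm (Fin n)) (r ε : ℝ)
    (hr0 : 0 < r) (hr : r ≤ (n.choose 2 : ℝ)) (hε0 : 0 < ε) (hεr : ε < r)
    (hDpos : 1 ≤ packNum n (ballKT n π r) ε) :
    Real.log (packNum n (ballKT n π r) ε) ≤
      (n : ℝ) * Real.log ((2 * (n : ℝ) + 2 * r) / ε) + 2 * n := by
  have hn2 : 2 ≤ n := by omega
  have hn0 : 0 < n := by omega
  have hnR : (0 : ℝ) < n := by exact_mod_cast hn0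
  have hn3' : (3 : ℝ) ≤ (n : ℝ) := by exact_mod_cast hn3
  set D := packNum n (ballKT n π r) ε with hDdef
  have hDposR : (0 : ℝ) < D := by exact_mod_cast hDpos
  set K₂ := ⌊ε / 2⌋₊ / n + 1 with hK₂def
  have hε2 : (0 : ℝ) ≤ ε / 2 := by linarith
  have hK₂n : K₂ ≤ n := K_le_n hn2 (by linarith)
  have hB2 := Bcard_ge_real (n := n) ⌊ε / 2⌋₊ hK₂n
  have hεnK₂ : ε / 2 ≤ (n : ℝ) * K₂ := rho_le_nK hn0 hε2
  have hpackR : (D : ℝ) * (Bcard n ⌊ε / 2⌋₊ : ℝ) ≤ (Bcard n ⌊r + ε / 2⌋₊ : ℝ) := by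
    exact_mod_cast pack_count π r ε hr0.le hε0
  have hBtop : (Bcard n ⌊r + ε / 2⌋₊ : ℝ) ≤ ((n : ℝ) + r + ε / 2) ^ n * Real.exp n / n ^ n := by
    refine (Bcard_le_real (n := n) ⌊r + ε / 2⌋₊).trans ?_
    have hfl : (⌊r + ε / 2⌋₊ : ℝ) ≤ r + ε / 2 := Nat.floor_le (by linarith)
    gcongr ?_ ^ n * Real.exp _ / _
    linarith
  have hK₂posR : (0 : ℝ) < (K₂ : ℝ) := by
    have : 0 < K₂ := Nat.succ_pos _
    exact_mod_cast this
  have hDb : (D : ℝ) ≤ ((2 * (n : ℝ) + 2 * r + ε) / ε) ^ n * Real.exp ((n : ℝ) + K₂) := by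
    have h1 : (D : ℝ) * ((K₂ : ℝ) ^ n * Real.exp (-(K₂ : ℝ)))
        ≤ ((n : ℝ) + r + ε / 2) ^ n * Real.exp n / n ^ n := by
      calc (D : ℝ) * ((K₂ : ℝ) ^ n * Real.exp (-(K₂ : ℝ)))
          ≤ (D : ℝ) * (Bcard n ⌊ε / 2⌋₊ : ℝ) := mul_le_mul_of_nonneg_left hB2 hDposR.le
        _ ≤ (Bcard n ⌊r + ε / 2⌋₊ : ℝ) := hpackR
        _ ≤ _ := hBtop
    have h2 : (D : ℝ) ≤ (((n : ℝ) + r + ε / 2) ^ n * Real.exp n / n ^ n) /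
        ((K₂ : ℝ) ^ n * Real.exp (-(K₂ : ℝ))) := by
      rw [le_div_iff₀ (by positivity)]
      exact h1
    refine h2.trans ?_
    have he : (((n : ℝ) + r + ε / 2) ^ n * Real.exp n / n ^ n) /
          ((K₂ : ℝ) ^ n * Real.exp (-(K₂ : ℝ)))
        = (((n : ℝ) + r + ε / 2) / ((n : ℝ) * K₂)) ^ n * Real.exp ((n : ℝ) + K₂) := by
      rw [Real.exp_add, Real.exp_neg, div_pow, mul_pow]
      have h3 : Real.exp (K₂ : ℝ) ≠ 0 := Real.exp_ne_zero _
      have h4 : ((n : ℝ)) ^ n ≠ 0 := by positivity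
      have h5 : ((K₂ : ℝ)) ^ n ≠ 0 := by positivity
      field_simp
    rw [he]
    have hb1 : ((n : ℝ) + r + ε / 2) / ((n : ℝ) * K₂) ≤ ((n : ℝ) + r + ε / 2) / (ε / 2) :=
      div_le_div_of_nonneg_left (by linarith) (by linarith) hεnK₂
    have hb2 : ((n : ℝ) + r + ε / 2) / (ε / 2) = (2 * (n : ℝ) + 2 * r + ε) / ε := by
      field_simp
    have hb3 : ((n : ℝ) + r + ε / 2) / ((n : ℝ) * K₂) ≤ (2 * (n : ℝ) + 2 * r + ε) / ε := by
      rw [← hb2]; exact hb1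
    gcongr
  have hargpos : (0 : ℝ) < (2 * (n : ℝ) + 2 * r + ε) / ε := by positivity
  have hlogD : Real.log (D : ℝ) ≤
      (n : ℝ) * Real.log ((2 * (n : ℝ) + 2 * r + ε) / ε) + ((n : ℝ) + K₂) := by
    calc Real.log (D : ℝ)
        ≤ Real.log (((2 * (n : ℝ) + 2 * r + ε) / ε) ^ n * Real.exp ((n : ℝ) + K₂)) :=
          Real.log_le_log hDposR hDb
      _ = (n : ℝ) * Real.log ((2 * (n : ℝ) + 2 * r + ε) / ε) + ((n : ℝ) + K₂) := by
          rw [Real.log_mul (by positivity) (Real.exp_ne_zero _), Real.log_pow, Real.log_exp]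
  have harg : Real.log ((2 * (n : ℝ) + 2 * r + ε) / ε) ≤
      Real.log ((3 : ℝ) / 2) + Real.log ((2 * (n : ℝ) + 2 * r) / ε) := by
    rw [← Real.log_mul (by norm_num) (by positivity : (2 * (n : ℝ) + 2 * r) / ε ≠ 0)]
    apply Real.log_le_log hargpos
    rw [← mul_div_assoc]
    gcongr
    linarith
  have hlog32 : Real.log ((3 : ℝ) / 2) ≤ 1 / 2 := by
    rw [Real.log_le_iff_le_exp (by norm_num)]
    have := Real.add_one_le_exp ((1 : ℝ) / 2)
    linarith
  have hK₂ub : (K₂ : ℝ) ≤ ε / (2 * (n : ℝ)) + 1 := by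
    have h1 : ((⌊ε / 2⌋₊ / n : ℕ) : ℝ) ≤ (⌊ε / 2⌋₊ : ℝ) / (n : ℝ) := Nat.cast_div_le
    have h2 : (⌊ε / 2⌋₊ : ℝ) ≤ ε / 2 := Nat.floor_le hε2
    have h3 : (⌊ε / 2⌋₊ : ℝ) / (n : ℝ) ≤ (ε / 2) / (n : ℝ) := by gcongr
    have h4 : (ε / 2) / (n : ℝ) = ε / (2 * (n : ℝ)) := by ring
    have h5 : (K₂ : ℝ) = ((⌊ε / 2⌋₊ / n : ℕ) : ℝ) + 1 := by
      rw [hK₂def]; push_cast; ring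
    rw [h5]
    linarith
  have hεub : ε ≤ (n : ℝ) * ((n : ℝ) - 1) / 2 := by
    have h := le_of_le_of_eq hr (choose2R hn2)
    linarith
  have hεq : ε / (2 * (n : ℝ)) ≤ ((n : ℝ) - 1) / 4 := by
    rw [div_le_div_iff₀ (by linarith) (by norm_num)]
    nlinarith
  have hmul : (n : ℝ) * Real.log ((2 * (n : ℝ) + 2 * r + ε) / ε) ≤
      (n : ℝ) * Real.log ((3 : ℝ) / 2) + (n : ℝ) * Real.log ((2 * (n : ℝ) + 2 * r) / ε) := by
    have h := mul_le_mul_of_nonneg_left harg (by positivity : (0 : ℝ) ≤ (n : ℝ))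
    rw [mul_add] at h
    exact h
  have hmul2 : (n : ℝ) * Real.log ((3 : ℝ) / 2) ≤ (n : ℝ) * (1 / 2) :=
    mul_le_mul_of_nonneg_left hlog32 (by positivity)
  linarith

/-- **Proposition 3 (metric entropy of Kendall tau balls).** For `r ∈ (0, (n choose 2)]`
and `ε ∈ (0, r)`,
`n log(r/(n+ε)) - 2n ≤ log N(B(π,r), ε) ≤ log D(B(π,r), ε) ≤ n log((2n+2r)/ε) + 2n`. -/
theorem metric_entropy_ball (n : ℕ) (π : Equiv.Perm (Fin n)) (r ε : ℝ)
    (hr0 : 0 < r) (hr : r ≤ (n.choose 2 : ℝ)) (hε0 : 0 < ε) (hεr : ε < r) :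
    (n : ℝ) * Real.log (r / ((n : ℝ) + ε)) - 2 * n ≤
        Real.log (coverNum n (ballKT n π r) ε) ∧
      Real.log (coverNum n (ballKT n π r) ε) ≤ Real.log (packNum n (ballKT n π r) ε) ∧
      Real.log (packNum n (ballKT n π r) ε) ≤
        (n : ℝ) * Real.log ((2 * (n : ℝ) + 2 * r) / ε) + 2 * n := by
  have hn2 : 2 ≤ n := by
    by_contra hn
    push_neg at hn
    have h0 : n.choose 2 = 0 := Nat.choose_eq_zero_of_lt (by omega)
    rw [h0] at hr
    norm_num at hr
    linarith
  have hNpos : 1 ≤ coverNum n (ballKT n π r) ε := coverNum_pos π r ε hr0.le hε0.le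
  have hND : coverNum n (ballKT n π r) ε ≤ packNum n (ballKT n π r) ε :=
    cover_le_pack π r ε hε0
  have hDpos : 1 ≤ packNum n (ballKT n π r) ε := hNpos.trans hND
  have hNposR : (0 : ℝ) < coverNum n (ballKT n π r) ε := by exact_mod_cast hNpos
  have hDposR : (0 : ℝ) < packNum n (ballKT n π r) ε := by exact_mod_cast hDpos
  refine ⟨cover_lower hn2 π r ε hr0 hr hε0, Real.log_le_log hNposR (by exact_mod_cast hND), ?_⟩
  rcases eq_or_lt_of_le hn2 with hn2' | hn3
  · -- n = 2
    have hn2'' : n = 2 := hn2'.symm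
    have hbase : (1 : ℝ) ≤ (2 * (n : ℝ) + 2 * r) / ε := by
      rw [le_div_iff₀ hε0]
      have : (0 : ℝ) ≤ (n : ℝ) := by positivity
      linarith
    have hD2 : packNum n (ballKT n π r) ε ≤ 2 := by
      have h := packNum_le_card π r ε
      rw [Fintype.card_perm, Fintype.card_fin] at h
      have hf : n.factorial = 2 := by rw [hn2'']; decide
      omega
    have hlogD : Real.log (packNum n (ballKT n π r) ε : ℝ) ≤ 1 := by
      calc Real.log (packNum n (ballKT n π r) ε : ℝ) ≤ Real.log 2 :=
            Real.log_le_log hDposR (by exact_mod_cast hD2)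
        _ ≤ 1 := by
            rw [Real.log_le_iff_le_exp (by norm_num)]
            have := Real.add_one_le_exp (1 : ℝ)
            linarith
    have hrhs : (0 : ℝ) ≤ (n : ℝ) * Real.log ((2 * (n : ℝ) + 2 * r) / ε) :=
      mul_nonneg (by positivity) (Real.log_nonneg hbase)
    have h4 : (4 : ℝ) ≤ 2 * (n : ℝ) := by
      rw [hn2'']
      norm_num
    linarith
  · -- n ≥ 3
    exact pack_upper hn3 π r ε hr0 hr hε0 hεr hDpos
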